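/- Assume the global d-set condition and let 0 < α < 2. Let c(x,y) be a Borel measurable function on ℝⁿ × ℝⁿ with 0 ≤ c(x,y) ≤ C₄ for all x, y, and let u : ℝⁿ → ℝ be continuously differentiable with compact support. Define f_u(x) := ∫_E (u(x) − u(y))² c(x,y) |x − y|^{−(d+α)} m(dy). Then f_u is bounded on E and belongs to L^p(E; m) for every p ∈ [1, ∞). -/

import Mathlib

open MeasureTheory Set ENNReal

set_option linter.unusedSectionVars false
set_option linter.unusedTactic false
set_option maxHeartbeats 1000000
section Aux

variable {X : Type*} [MeasurableSpace X] [MetricSpace X] [OpensMeasurableSpace X]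
  [MeasurableSingletonClass X]

/-- integral over a shell is at most sup times measure of the outer ball -/
lemma shell_bound (m : Measure X) (x : X) (s t B : ℝ)
    (F : X → ℝ≥0∞)
    (hF : ∀ y, s ≤ dist x y → dist x y < t → F y ≤ ENNReal.ofReal B) :
    ∫⁻ y in {y | s ≤ dist x y} ∩ Metric.ball x t, F y ∂m
      ≤ ENNReal.ofReal B * m (Metric.ball x t) := by
  have hmeas : MeasurableSet ({y | s ≤ dist x y} ∩ Metric.ball x t) := by
    refine (IsClosed.measurableSet ?_).inter Metric.isOpen_ball.measurableSet
    exact isClosed_le continuous_const (continuous_const.dist continuous_id)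
  calc ∫⁻ y in {y | s ≤ dist x y} ∩ Metric.ball x t, F y ∂m
      ≤ ∫⁻ _ in {y | s ≤ dist x y} ∩ Metric.ball x t, ENNReal.ofReal B ∂m := by
        refine setLIntegral_mono' hmeas fun y hy => ?_
        exact hF y hy.1 (by simpa [dist_comm] using hy.2)
    _ = ENNReal.ofReal B * m ({y | s ≤ dist x y} ∩ Metric.ball x t) :=
        setLIntegral_const _ _
    _ ≤ ENNReal.ofReal B * m (Metric.ball x t) := by
        exact mul_le_mul_right (measure_mono inter_subset_right) _

lemma geom_ne_top {ρ : ℝ} (hρ : ρ < 1) : (1 - ENNReal.ofReal ρ)⁻¹ ≠ ⊤ := by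
  rw [ENNReal.inv_ne_top]
  intro h
  rw [tsub_eq_zero_iff_le] at h
  exact absurd (ENNReal.ofReal_lt_one.2 hρ) (not_lt.2 h)

lemma cover_pow (D R : ℝ) (hR : 0 < R) (hD : 0 < D) :
    ∃ n : ℤ, (2:ℝ) ^ n * R ≤ D ∧ D < (2:ℝ) ^ (n + 1) * R := by
  obtain ⟨n, h1, h2⟩ := exists_mem_Ico_zpow (div_pos hD hR) (one_lt_two (α := ℝ))
  exact ⟨n, by rwa [← le_div_iff₀ hR], by rwa [← div_lt_iff₀ hR]⟩

lemma cover_far {D R : ℝ} (hR : 0 < R) (hD : R ≤ D) :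
    ∃ k : ℕ, (2:ℝ) ^ (k:ℝ) * R ≤ D ∧ D < (2:ℝ) ^ ((k:ℝ) + 1) * R := by
  obtain ⟨n, h1, h2⟩ := cover_pow D R hR (hR.trans_le hD)
  have hn : 0 ≤ n := by
    by_contra hneg
    push_neg at hneg
    have h3 : (2:ℝ) ^ (n + 1) ≤ 1 := by
      calc (2:ℝ) ^ (n+1) ≤ (2:ℝ) ^ (0:ℤ) :=
        zpow_le_zpow_right₀ (by norm_num) (by omega)
      _ = 1 := by norm_num
    have h4 : (2:ℝ) ^ (n+1) * R ≤ R := by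
      nlinarith [zpow_pos (by norm_num : (0:ℝ) < 2) (n+1)]
    linarith
  have hcast : ((n.toNat : ℝ)) = (n:ℝ) := by exact_mod_cast Int.toNat_of_nonneg hn
  refine ⟨n.toNat, ?_, ?_⟩
  · rw [← Real.rpow_intCast 2 n] at h1
    rwa [hcast]
  · rw [← Real.rpow_intCast 2 (n+1)] at h2
    rw [hcast]
    rwa [show (((n + 1 : ℤ)) : ℝ) = (n:ℝ) + 1 by push_cast; ring] at h2

lemma cover_near {D : ℝ} (hD0 : 0 < D) (hD : D < 1) :
    ∃ k : ℕ, (2:ℝ) ^ (-((k:ℝ) + 1)) ≤ D ∧ D < (2:ℝ) ^ (-(k:ℝ)) := by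
  obtain ⟨n, h1, h2⟩ := cover_pow D 1 one_pos hD0
  rw [mul_one] at h1 h2
  have hn : n + 1 ≤ 0 := by
    by_contra hpos
    push_neg at hpos
    have : (1:ℝ) ≤ (2:ℝ) ^ n := by
      calc (1:ℝ) = (2:ℝ) ^ (0:ℤ) := by norm_num
      _ ≤ (2:ℝ) ^ n := zpow_le_zpow_right₀ (by norm_num) (by omega)
    linarith
  have hcast : (((-(n+1)).toNat : ℝ)) = -((n:ℝ)+1) := by
    have := Int.toNat_of_nonneg (by omega : 0 ≤ -(n+1))
    have : (((-(n+1)).toNat : ℤ) : ℝ) = ((-(n+1) : ℤ) : ℝ) := by exact_mod_cast this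
    push_cast at this
    push_cast
    linarith
  refine ⟨(-(n+1)).toNat, ?_, ?_⟩
  · rw [← Real.rpow_intCast 2 n] at h1
    rw [hcast]
    rwa [show ((n:ℤ):ℝ) = -(-((n:ℝ)+1)+1) by push_cast; ring] at h1
  · rw [← Real.rpow_intCast 2 (n+1)] at h2
    rw [hcast]
    rwa [show (((n+1:ℤ)):ℝ) = -(-((n:ℝ)+1)) by push_cast; ring] at h2

lemma alg_pow_far (d β R : ℝ) (hR : 0 < R) (k : ℕ) :
    ((2:ℝ) ^ (k:ℝ) * R) ^ (-(d+β)) * ((2:ℝ) ^ ((k:ℝ)+1) * R) ^ d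
      = (2:ℝ) ^ d * R ^ (-β) * ((2:ℝ) ^ (-β)) ^ k := by
  have h2 : (0:ℝ) ≤ 2 := by norm_num
  rw [← Real.rpow_natCast ((2:ℝ) ^ (-β)) k, ← Real.rpow_mul h2,
      Real.mul_rpow (Real.rpow_nonneg h2 _) hR.le,
      Real.mul_rpow (Real.rpow_nonneg h2 _) hR.le,
      ← Real.rpow_mul h2, ← Real.rpow_mul h2,
      mul_mul_mul_comm, mul_right_comm ((2:ℝ)^d),
      ← Real.rpow_add (by norm_num : (0:ℝ) < 2), ← Real.rpow_add hR,
      ← Real.rpow_add (by norm_num : (0:ℝ) < 2)]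
  rw [show (k:ℝ) * (-(d+β)) + ((k:ℝ)+1) * d = d + -β * (k:ℝ) by ring,
      show -(d+β) + d = -β by ring]

lemma alg_pow_near (d α : ℝ) (k : ℕ) :
    ((2:ℝ) ^ (-(k:ℝ))) ^ (2:ℝ) * ((2:ℝ) ^ (-((k:ℝ)+1))) ^ (-(d+α))
        * ((2:ℝ) ^ (-(k:ℝ))) ^ d
      = (2:ℝ) ^ (d+α) * ((2:ℝ) ^ (α-2)) ^ k := by
  have h2 : (0:ℝ) ≤ 2 := by norm_num
  rw [← Real.rpow_natCast ((2:ℝ) ^ (α-2)) k, ← Real.rpow_mul h2,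
      ← Real.rpow_mul h2, ← Real.rpow_mul h2, ← Real.rpow_mul h2,
      ← Real.rpow_add (by norm_num : (0:ℝ) < 2),
      ← Real.rpow_add (by norm_num : (0:ℝ) < 2),
      ← Real.rpow_add (by norm_num : (0:ℝ) < 2)]
  rw [show -(k:ℝ) * 2 + -((k:ℝ)+1) * (-(d+α)) + -(k:ℝ) * d = d + α + (α-2) * (k:ℝ) by ring]


variable {X : Type*} [MeasurableSpace X] [MetricSpace X] [OpensMeasurableSpace X]
  [MeasurableSingletonClass X]

lemma tail_bound (m : Measure X) (x : X) (d C₂ : ℝ) (hd : 0 ≤ d) (hC₂ : 0 ≤ C₂)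
    (hball : ∀ r : ℝ, 0 < r → m (Metric.ball x r) ≤ ENNReal.ofReal (C₂ * r ^ d))
    (R β Q : ℝ) (hR : 0 < R) (hβ : 0 < β) (hQ : 0 ≤ Q)
    (F : X → ℝ≥0∞)
    (hF : ∀ y, R ≤ dist x y → F y ≤ ENNReal.ofReal (Q * dist x y ^ (-(d+β)))) :
    ∫⁻ y in {y | R ≤ dist x y}, F y ∂m
      ≤ ENNReal.ofReal (Q * C₂ * 2 ^ d * R ^ (-β))
          * (1 - ENNReal.ofReal ((2:ℝ) ^ (-β)))⁻¹ := by
  set S : ℕ → Set X := fun k =>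
    {y | (2:ℝ) ^ (k:ℝ) * R ≤ dist x y} ∩ Metric.ball x ((2:ℝ) ^ ((k:ℝ)+1) * R) with hS
  have hcov : {y | R ≤ dist x y} ⊆ ⋃ k, S k := by
    intro y hy
    obtain ⟨k, h1, h2⟩ := cover_far hR hy
    exact mem_iUnion.2 ⟨k, h1, by simpa [Metric.mem_ball, dist_comm] using h2⟩
  have hterm : ∀ k : ℕ, ∫⁻ y in S k, F y ∂m
      ≤ ENNReal.ofReal (Q * C₂ * 2 ^ d * R ^ (-β)) * (ENNReal.ofReal ((2:ℝ) ^ (-β))) ^ k := by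
    intro k
    have hpos : 0 < (2:ℝ) ^ (k:ℝ) * R :=
      mul_pos (Real.rpow_pos_of_pos (by norm_num) _) hR
    have htpos : 0 < (2:ℝ) ^ ((k:ℝ)+1) * R :=
      mul_pos (Real.rpow_pos_of_pos (by norm_num) _) hR
    have hBk : ∀ y, (2:ℝ) ^ (k:ℝ) * R ≤ dist x y → dist x y < (2:ℝ) ^ ((k:ℝ)+1) * R →
        F y ≤ ENNReal.ofReal (Q * ((2:ℝ) ^ (k:ℝ) * R) ^ (-(d+β))) := by
      intro y h1 _h2
      have hRy : R ≤ dist x y := by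
        have h1' : (1:ℝ) * R ≤ (2:ℝ) ^ (k:ℝ) * R :=
          mul_le_mul_of_nonneg_right (Real.one_le_rpow one_le_two (Nat.cast_nonneg k)) hR.le
        linarith
      refine (hF y hRy).trans (ENNReal.ofReal_le_ofReal ?_)
      exact mul_le_mul_of_nonneg_left
        (Real.rpow_le_rpow_of_nonpos hpos h1 (by linarith : -(d+β) ≤ 0)) hQ
    calc ∫⁻ y in S k, F y ∂m
        ≤ ENNReal.ofReal (Q * ((2:ℝ) ^ (k:ℝ) * R) ^ (-(d+β)))
            * m (Metric.ball x ((2:ℝ) ^ ((k:ℝ)+1) * R)) := shell_bound m x _ _ _ F hBk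
      _ ≤ ENNReal.ofReal (Q * ((2:ℝ) ^ (k:ℝ) * R) ^ (-(d+β)))
            * ENNReal.ofReal (C₂ * ((2:ℝ) ^ ((k:ℝ)+1) * R) ^ d) :=
          mul_le_mul_right (hball _ htpos) _
      _ = ENNReal.ofReal (Q * C₂ * 2 ^ d * R ^ (-β)) * (ENNReal.ofReal ((2:ℝ) ^ (-β))) ^ k := by
          rw [← ENNReal.ofReal_mul (by positivity), ← ENNReal.ofReal_pow
            (Real.rpow_nonneg (by norm_num) _), ← ENNReal.ofReal_mul (by positivity)]
          congr 1
          have := alg_pow_far d β R hR k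
          linear_combination (Q * C₂) * this
  calc ∫⁻ y in {y | R ≤ dist x y}, F y ∂m
      ≤ ∫⁻ y in ⋃ k, S k, F y ∂m := lintegral_mono_set hcov
    _ ≤ ∑' k, ∫⁻ y in S k, F y ∂m := lintegral_iUnion_le _ _
    _ ≤ ∑' k, ENNReal.ofReal (Q * C₂ * 2 ^ d * R ^ (-β))
          * (ENNReal.ofReal ((2:ℝ) ^ (-β))) ^ k := ENNReal.tsum_le_tsum hterm
    _ = ENNReal.ofReal (Q * C₂ * 2 ^ d * R ^ (-β))
          * (1 - ENNReal.ofReal ((2:ℝ) ^ (-β)))⁻¹ := by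
        rw [ENNReal.tsum_mul_left, ENNReal.tsum_geometric]

lemma near_bound (m : Measure X) (x : X) (d α C₂ : ℝ) (hd : 0 < d) (hα0 : 0 < α)
    (hα2 : α < 2) (hC₂ : 0 ≤ C₂)
    (hball : ∀ r : ℝ, 0 < r → m (Metric.ball x r) ≤ ENNReal.ofReal (C₂ * r ^ d))
    (Q : ℝ) (hQ : 0 ≤ Q)
    (F : X → ℝ≥0∞) (hFx : F x = 0)
    (hF : ∀ y, y ≠ x →
      F y ≤ ENNReal.ofReal (Q * (dist x y ^ (2:ℝ) * dist x y ^ (-(d+α))))) :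
    ∫⁻ y in Metric.ball x 1, F y ∂m
      ≤ ENNReal.ofReal (Q * C₂ * 2 ^ (d+α))
          * (1 - ENNReal.ofReal ((2:ℝ) ^ (α-2)))⁻¹ := by
  set T : ℕ → Set X := fun k =>
    {y | (2:ℝ) ^ (-((k:ℝ)+1)) ≤ dist x y} ∩ Metric.ball x ((2:ℝ) ^ (-(k:ℝ))) with hT
  have hcov : Metric.ball x 1 ⊆ {x} ∪ ⋃ k, T k := by
    intro y hy
    rcases eq_or_ne y x with h | h
    · exact Or.inl h
    · have hdy : 0 < dist x y := dist_pos.2 (Ne.symm h)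
      have hlt : dist x y < 1 := by simpa [dist_comm] using hy
      obtain ⟨k, h1, h2⟩ := cover_near hdy hlt
      exact Or.inr (mem_iUnion.2 ⟨k, h1, by simpa [Metric.mem_ball, dist_comm] using h2⟩)
  have hsing : ∫⁻ y in {x}, F y ∂m = 0 := by
    have h0 : ∫⁻ y in {x}, F y ∂m ≤ ∫⁻ _ in ({x} : Set X), 0 ∂m := by
      refine setLIntegral_mono' (measurableSet_singleton x) fun y hy => ?_
      rw [mem_singleton_iff] at hy
      rw [hy, hFx]
    simpa using h0
  have hterm : ∀ k : ℕ, ∫⁻ y in T k, F y ∂m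
      ≤ ENNReal.ofReal (Q * C₂ * 2 ^ (d+α)) * (ENNReal.ofReal ((2:ℝ) ^ (α-2))) ^ k := by
    intro k
    have hspos : 0 < (2:ℝ) ^ (-((k:ℝ)+1)) := Real.rpow_pos_of_pos (by norm_num) _
    have htpos : 0 < (2:ℝ) ^ (-(k:ℝ)) := Real.rpow_pos_of_pos (by norm_num) _
    have hBk : ∀ y, (2:ℝ) ^ (-((k:ℝ)+1)) ≤ dist x y → dist x y < (2:ℝ) ^ (-(k:ℝ)) →
        F y ≤ ENNReal.ofReal (Q * (((2:ℝ) ^ (-(k:ℝ))) ^ (2:ℝ)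
            * ((2:ℝ) ^ (-((k:ℝ)+1))) ^ (-(d+α)))) := by
      intro y h1 h2
      have hne : y ≠ x := by
        intro hxy
        rw [hxy, dist_self] at h1
        linarith
      refine (hF y hne).trans (ENNReal.ofReal_le_ofReal ?_)
      refine mul_le_mul_of_nonneg_left ?_ hQ
      refine mul_le_mul ?_ ?_ (Real.rpow_nonneg dist_nonneg _) (Real.rpow_nonneg htpos.le _)
      · exact Real.rpow_le_rpow dist_nonneg h2.le (by norm_num)
      · exact Real.rpow_le_rpow_of_nonpos hspos h1 (by linarith : -(d+α) ≤ 0)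
    calc ∫⁻ y in T k, F y ∂m
        ≤ ENNReal.ofReal (Q * (((2:ℝ) ^ (-(k:ℝ))) ^ (2:ℝ)
            * ((2:ℝ) ^ (-((k:ℝ)+1))) ^ (-(d+α)))) * m (Metric.ball x ((2:ℝ) ^ (-(k:ℝ)))) :=
          shell_bound m x _ _ _ F hBk
      _ ≤ ENNReal.ofReal (Q * (((2:ℝ) ^ (-(k:ℝ))) ^ (2:ℝ)
            * ((2:ℝ) ^ (-((k:ℝ)+1))) ^ (-(d+α))))
            * ENNReal.ofReal (C₂ * ((2:ℝ) ^ (-(k:ℝ))) ^ d) := mul_le_mul_right (hball _ htpos) _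
      _ = ENNReal.ofReal (Q * C₂ * 2 ^ (d+α)) * (ENNReal.ofReal ((2:ℝ) ^ (α-2))) ^ k := by
          rw [← ENNReal.ofReal_mul (by positivity), ← ENNReal.ofReal_pow
            (Real.rpow_nonneg (by norm_num) _), ← ENNReal.ofReal_mul (by positivity)]
          congr 1
          have := alg_pow_near d α k
          linear_combination (Q * C₂) * this
  calc ∫⁻ y in Metric.ball x 1, F y ∂m
      ≤ ∫⁻ y in {x} ∪ ⋃ k, T k, F y ∂m := lintegral_mono_set hcov
    _ ≤ (∫⁻ y in {x}, F y ∂m) + ∫⁻ y in ⋃ k, T k, F y ∂m := lintegral_union_le _ _ _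
    _ = ∫⁻ y in ⋃ k, T k, F y ∂m := by rw [hsing, zero_add]
    _ ≤ ∑' k, ∫⁻ y in T k, F y ∂m := lintegral_iUnion_le _ _
    _ ≤ ∑' k, ENNReal.ofReal (Q * C₂ * 2 ^ (d+α))
          * (ENNReal.ofReal ((2:ℝ) ^ (α-2))) ^ k := ENNReal.tsum_le_tsum hterm
    _ = ENNReal.ofReal (Q * C₂ * 2 ^ (d+α))
          * (1 - ENNReal.ofReal ((2:ℝ) ^ (α-2)))⁻¹ := by
        rw [ENNReal.tsum_mul_left, ENNReal.tsum_geometric]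

/-- On a global `d`-set `E ⊆ ℝⁿ` with `0 < α < 2`, for `u ∈ C¹_c(ℝⁿ)` the function
`f_u(x) = ∫_E (u(x)-u(y))² c(x,y) |x-y|^{-(d+α)} m(dy)` is bounded on `E`
and lies in `L^p(E;m)` for every `p ∈ [1,∞)`. -/
theorem stmt_12 (n : ℕ) (hn : 1 ≤ n) (d : ℝ) (hd0 : 0 < d) (hdn : d ≤ n)
    (E : Set (EuclideanSpace ℝ (Fin n))) (hE : MeasurableSet E) (hEne : E.Nonempty)
    (m : Measure (EuclideanSpace ℝ (Fin n))) (hmE : m Eᶜ = 0)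
    (C₁ C₂ : ℝ) (hC₁ : 0 < C₁) (hC₁₂ : C₁ ≤ C₂)
    (hlow : ∀ x ∈ E, ∀ r : ℝ, 0 < r → ENNReal.ofReal (C₁ * r ^ d) ≤ m (Metric.ball x r))
    (hup : ∀ x ∈ E, ∀ r : ℝ, 0 < r → m (Metric.ball x r) ≤ ENNReal.ofReal (C₂ * r ^ d))
    (α : ℝ) (hα0 : 0 < α) (hα2 : α < 2)
    (c : EuclideanSpace ℝ (Fin n) → EuclideanSpace ℝ (Fin n) → ℝ) (C₄ : ℝ)
    (hc_meas : Measurable (fun q : EuclideanSpace ℝ (Fin n) × EuclideanSpace ℝ (Fin n) => c q.1 q.2))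
    (hc0 : ∀ x y, 0 ≤ c x y) (hcC₄ : ∀ x y, c x y ≤ C₄)
    (u : EuclideanSpace ℝ (Fin n) → ℝ) (hu : ContDiff ℝ 1 u) (hu_supp : HasCompactSupport u) :
    (∃ M : ℝ, ∀ x ∈ E,
        (∫⁻ y in E, ENNReal.ofReal ((u x - u y) ^ 2 * c x y * dist x y ^ (-(d + α))) ∂m)
          ≤ ENNReal.ofReal M) ∧
    (∀ p : ℝ, 1 ≤ p →
        (∫⁻ x in E,
            (∫⁻ y in E, ENNReal.ofReal ((u x - u y) ^ 2 * c x y * dist x y ^ (-(d + α))) ∂m) ^ p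
          ∂m) < ⊤) := by
  obtain ⟨z, hz⟩ := hEne
  have hC₂0 : (0:ℝ) ≤ C₂ := le_trans hC₁.le hC₁₂
  have hC₄ : (0:ℝ) ≤ C₄ := le_trans (hc0 z z) (hcC₄ z z)
  obtain ⟨Mu, hMu⟩ := hu.continuous.bounded_above_of_compact_support hu_supp
  have hMu0 : 0 ≤ Mu := le_trans (norm_nonneg (u z)) (hMu z)
  obtain ⟨L, hL⟩ := ContDiff.lipschitzWith_of_hasCompactSupport hu_supp hu one_ne_zero
  have hLip : ∀ a b, |u a - u b| ≤ (L:ℝ) * dist a b := by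
    intro a b
    have := hL.dist_le_mul a b
    rwa [Real.dist_eq] at this
  -- the uniform bound
  set K : ℝ≥0∞ :=
    ENNReal.ofReal ((L:ℝ)^2*C₄ * C₂ * 2^(d+α)) * (1 - ENNReal.ofReal ((2:ℝ)^(α-2)))⁻¹
      + ENNReal.ofReal ((4*Mu^2*C₄) * C₂ * 2^d * (1:ℝ)^(-α))
          * (1 - ENNReal.ofReal ((2:ℝ)^(-α)))⁻¹ with hK
  have hKne : K ≠ ⊤ := by
    apply ENNReal.add_ne_top.2
    constructor
    · exact ENNReal.mul_ne_top ENNReal.ofReal_ne_top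
        (geom_ne_top (Real.rpow_lt_one_of_one_lt_of_neg one_lt_two (by linarith)))
    · exact ENNReal.mul_ne_top ENNReal.ofReal_ne_top
        (geom_ne_top (Real.rpow_lt_one_of_one_lt_of_neg one_lt_two (by linarith)))
  have key : ∀ x ∈ E,
      (∫⁻ y in E, ENNReal.ofReal ((u x - u y) ^ 2 * c x y * dist x y ^ (-(d + α))) ∂m) ≤ K := by
    intro x hx
    have hcover : E ⊆ Metric.ball x 1 ∪ {y | 1 ≤ dist x y} := by
      intro y _
      rcases lt_or_ge (dist x y) 1 with h | h
      · exact Or.inl (by simpa [Metric.mem_ball, dist_comm] using h)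
      · exact Or.inr h
    calc (∫⁻ y in E, ENNReal.ofReal ((u x - u y) ^ 2 * c x y * dist x y ^ (-(d + α))) ∂m)
        ≤ ∫⁻ y in Metric.ball x 1 ∪ {y | 1 ≤ dist x y},
            ENNReal.ofReal ((u x - u y) ^ 2 * c x y * dist x y ^ (-(d + α))) ∂m :=
          lintegral_mono_set hcover
      _ ≤ (∫⁻ y in Metric.ball x 1,
              ENNReal.ofReal ((u x - u y) ^ 2 * c x y * dist x y ^ (-(d + α))) ∂m)
            + ∫⁻ y in {y | 1 ≤ dist x y},
              ENNReal.ofReal ((u x - u y) ^ 2 * c x y * dist x y ^ (-(d + α))) ∂m :=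
          lintegral_union_le _ _ _
      _ ≤ K := by
          rw [hK]
          apply add_le_add
          · refine near_bound m x d α C₂ hd0 hα0 hα2 hC₂0 (fun r hr => hup x hx r hr)
              ((L:ℝ)^2*C₄) (by positivity) _ (by simp) ?_
            intro y hy
            apply ENNReal.ofReal_le_ofReal
            have h2 : dist x y ^ (2:ℝ) = dist x y ^ (2:ℕ) := by
              rw [show (2:ℝ) = ((2:ℕ):ℝ) by norm_num, Real.rpow_natCast]
            have h1 : (u x - u y)^2 ≤ (L:ℝ)^2 * dist x y^2 := by
              have h := hLip x y
              nlinarith [sq_abs (u x - u y), abs_nonneg (u x - u y),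
                mul_nonneg (NNReal.coe_nonneg L) (dist_nonneg : (0:ℝ) ≤ dist x y)]
            have ht : (0:ℝ) ≤ dist x y ^ (-(d+α)) := Real.rpow_nonneg dist_nonneg _
            have h3 : (u x - u y)^2 * c x y ≤ (L:ℝ)^2 * dist x y^2 * C₄ :=
              mul_le_mul h1 (hcC₄ x y) (hc0 x y) (by positivity)
            calc (u x - u y)^2 * c x y * dist x y^(-(d+α))
                ≤ ((L:ℝ)^2 * dist x y^2 * C₄) * dist x y^(-(d+α)) :=
                  mul_le_mul_of_nonneg_right h3 ht
              _ = (L:ℝ)^2*C₄ * (dist x y^(2:ℝ) * dist x y^(-(d+α))) := by rw [h2]; ring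
          · refine tail_bound m x d C₂ hd0.le hC₂0 (fun r hr => hup x hx r hr)
              1 α (4*Mu^2*C₄) one_pos hα0 (by positivity) _ ?_
            intro y _
            apply ENNReal.ofReal_le_ofReal
            have hmx := hMu x; have hmy := hMu y
            rw [Real.norm_eq_abs, abs_le] at hmx hmy
            have h1 : (u x - u y)^2 ≤ 4*Mu^2 := by nlinarith
            have ht : (0:ℝ) ≤ dist x y ^ (-(d+α)) := Real.rpow_nonneg dist_nonneg _
            have h3 : (u x - u y)^2 * c x y ≤ 4*Mu^2 * C₄ :=
              mul_le_mul h1 (hcC₄ x y) (hc0 x y) (by positivity)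
            calc (u x - u y)^2 * c x y * dist x y^(-(d+α))
                ≤ (4*Mu^2 * C₄) * dist x y^(-(d+α)) := mul_le_mul_of_nonneg_right h3 ht
              _ = 4*Mu^2*C₄ * dist x y^(-(d+α)) := by ring
  constructor
  · exact ⟨K.toReal, fun x hx => by rw [ENNReal.ofReal_toReal hKne]; exact key x hx⟩
  · intro p hp
    obtain ⟨ρ, hρ0, hρ⟩ := hu_supp.isBounded.subset_closedBall_lt 0 z
    set A : ℝ := Mu^2*C₄*(2:ℝ)^(d+α) * (C₂ * (2*ρ)^d) with hAdef
    have hA : 0 ≤ A := by positivity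
    have hfar : ∀ x ∈ E, 2*ρ ≤ dist z x →
        (∫⁻ y in E, ENNReal.ofReal ((u x - u y) ^ 2 * c x y * dist x y ^ (-(d + α))) ∂m)
          ≤ ENNReal.ofReal (A * dist z x ^ (-(d+α))) := by
      intro x hx hdist
      have hdzx : 0 < dist z x := lt_of_lt_of_le (by linarith) hdist
      have hux : u x = 0 := by
        apply image_eq_zero_of_notMem_tsupport
        intro hmem
        have hmem' := hρ hmem
        rw [Metric.mem_closedBall, dist_comm] at hmem'
        linarith
      have hpt : ∀ y, ENNReal.ofReal ((u x - u y) ^ 2 * c x y * dist x y ^ (-(d + α)))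
          ≤ (Metric.closedBall z ρ).indicator
              (fun _ => ENNReal.ofReal (Mu^2*C₄ * (dist z x / 2)^(-(d+α)))) y := by
        intro y
        by_cases hy : y ∈ Metric.closedBall z ρ
        · rw [indicator_of_mem hy]
          apply ENNReal.ofReal_le_ofReal
          have hdzy : dist z y ≤ ρ := by
            rw [Metric.mem_closedBall] at hy
            rw [dist_comm]; exact hy
          have hxy : dist z x / 2 ≤ dist x y := by
            have htri := dist_triangle z y x
            rw [dist_comm y x] at htri
            linarith
          have h1 : dist x y ^ (-(d+α)) ≤ (dist z x / 2) ^ (-(d+α)) :=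
            Real.rpow_le_rpow_of_nonpos (by linarith) hxy (by linarith)
          have h2 : (u x - u y)^2 ≤ Mu^2 := by
            rw [hux]
            have hmy := hMu y
            rw [Real.norm_eq_abs, abs_le] at hmy
            nlinarith
          have h3 : (u x - u y)^2 * c x y ≤ Mu^2 * C₄ :=
            mul_le_mul h2 (hcC₄ x y) (hc0 x y) (by positivity)
          have ht : (0:ℝ) ≤ dist x y ^ (-(d+α)) := Real.rpow_nonneg dist_nonneg _
          calc (u x - u y)^2 * c x y * dist x y^(-(d+α))
              ≤ (Mu^2*C₄) * dist x y^(-(d+α)) := mul_le_mul_of_nonneg_right h3 ht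
            _ ≤ Mu^2*C₄ * (dist z x / 2)^(-(d+α)) :=
                mul_le_mul_of_nonneg_left h1 (by positivity)
        · rw [indicator_of_notMem hy]
          have huy : u y = 0 := image_eq_zero_of_notMem_tsupport (fun hmem => hy (hρ hmem))
          simp [hux, huy]
      calc (∫⁻ y in E, ENNReal.ofReal ((u x - u y) ^ 2 * c x y * dist x y ^ (-(d + α))) ∂m)
          ≤ ∫⁻ y in E, (Metric.closedBall z ρ).indicator
              (fun _ => ENNReal.ofReal (Mu^2*C₄ * (dist z x / 2)^(-(d+α)))) y ∂m :=
            lintegral_mono fun y => hpt y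
        _ = ∫⁻ _ in Metric.closedBall z ρ,
              ENNReal.ofReal (Mu^2*C₄ * (dist z x / 2)^(-(d+α))) ∂(m.restrict E) :=
            lintegral_indicator measurableSet_closedBall _
        _ = ENNReal.ofReal (Mu^2*C₄ * (dist z x / 2)^(-(d+α)))
              * (m.restrict E) (Metric.closedBall z ρ) := setLIntegral_const _ _
        _ ≤ ENNReal.ofReal (Mu^2*C₄ * (dist z x / 2)^(-(d+α))) * m (Metric.ball z (2*ρ)) := by
            apply mul_le_mul_right
            rw [Measure.restrict_apply measurableSet_closedBall]
            refine measure_mono (inter_subset_left.trans fun y hy => ?_)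
            rw [Metric.mem_closedBall] at hy
            rw [Metric.mem_ball]
            linarith
        _ ≤ ENNReal.ofReal (Mu^2*C₄ * (dist z x / 2)^(-(d+α)))
              * ENNReal.ofReal (C₂ * (2*ρ)^d) :=
            mul_le_mul_right (hup z hz _ (by linarith)) _
        _ = ENNReal.ofReal (A * dist z x^(-(d+α))) := by
            rw [← ENNReal.ofReal_mul (by positivity)]
            congr 1
            have hdiv : (dist z x / 2)^(-(d+α)) = (2:ℝ)^(d+α) * dist z x^(-(d+α)) := by
              rw [Real.div_rpow dist_nonneg (by norm_num : (0:ℝ) ≤ 2),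
                Real.rpow_neg (by norm_num : (0:ℝ) ≤ 2) (d+α), div_eq_mul_inv, inv_inv, mul_comm]
            rw [hAdef, hdiv]; ring
    set β : ℝ := p*(d+α) - d with hβdef
    have hβ : 0 < β := by nlinarith
    have hp0 : (0:ℝ) ≤ p := by linarith
    have hKp : K^p ≠ ⊤ := ENNReal.rpow_ne_top_of_nonneg hp0 hKne
    have hA1 : (∫⁻ x in E ∩ Metric.ball z (2*ρ),
        (∫⁻ y in E, ENNReal.ofReal ((u x - u y) ^ 2 * c x y * dist x y ^ (-(d + α))) ∂m) ^ p ∂m)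
        ≤ K^p * ENNReal.ofReal (C₂ * (2*ρ)^d) := by
      calc (∫⁻ x in E ∩ Metric.ball z (2*ρ),
          (∫⁻ y in E, ENNReal.ofReal ((u x - u y) ^ 2 * c x y * dist x y ^ (-(d + α))) ∂m)^p ∂m)
          ≤ ∫⁻ _ in E ∩ Metric.ball z (2*ρ), K^p ∂m :=
            setLIntegral_mono' (hE.inter Metric.isOpen_ball.measurableSet)
              (fun x hx => ENNReal.rpow_le_rpow (key x hx.1) hp0)
        _ = K^p * m (E ∩ Metric.ball z (2*ρ)) := setLIntegral_const _ _
        _ ≤ K^p * ENNReal.ofReal (C₂ * (2*ρ)^d) :=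
            mul_le_mul_right
              ((measure_mono inter_subset_right).trans (hup z hz _ (by linarith))) _
    have hA2 : (∫⁻ x in E \ Metric.ball z (2*ρ),
        (∫⁻ y in E, ENNReal.ofReal ((u x - u y) ^ 2 * c x y * dist x y ^ (-(d + α))) ∂m) ^ p ∂m)
        ≤ ENNReal.ofReal (A^p * C₂ * 2 ^ d * (2*ρ) ^ (-β))
            * (1 - ENNReal.ofReal ((2:ℝ) ^ (-β)))⁻¹ := by
      have hstep : (∫⁻ x in E \ Metric.ball z (2*ρ),
          (∫⁻ y in E, ENNReal.ofReal ((u x - u y) ^ 2 * c x y * dist x y ^ (-(d + α))) ∂m)^p ∂m)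
          ≤ ∫⁻ x in E \ Metric.ball z (2*ρ),
              ENNReal.ofReal (A^p * dist z x ^ (-(d+β))) ∂m := by
        refine setLIntegral_mono' (hE.diff Metric.isOpen_ball.measurableSet) fun x hx => ?_
        have hd2 : 2*ρ ≤ dist z x := by
          have hxb := hx.2
          rw [Metric.mem_ball, dist_comm] at hxb
          linarith [not_lt.1 hxb]
        calc (∫⁻ y in E, ENNReal.ofReal ((u x - u y) ^ 2 * c x y * dist x y ^ (-(d+α))) ∂m)^p
            ≤ (ENNReal.ofReal (A * dist z x^(-(d+α))))^p :=
              ENNReal.rpow_le_rpow (hfar x hx.1 hd2) hp0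
          _ = ENNReal.ofReal ((A * dist z x^(-(d+α)))^p) :=
              ENNReal.ofReal_rpow_of_nonneg (by positivity) hp0
          _ = ENNReal.ofReal (A^p * dist z x ^ (-(d+β))) := by
              congr 1
              rw [Real.mul_rpow hA (Real.rpow_nonneg dist_nonneg _),
                ← Real.rpow_mul dist_nonneg]
              congr 1
              rw [hβdef]; ring
      refine hstep.trans ?_
      have hsub : E \ Metric.ball z (2*ρ) ⊆ {x | 2*ρ ≤ dist z x} := by
        intro x hx
        have hxb := hx.2
        rw [Metric.mem_ball, dist_comm] at hxb
        exact not_lt.1 hxb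
      refine (lintegral_mono_set hsub).trans ?_
      exact tail_bound m z d C₂ hd0.le hC₂0 (fun r hr => hup z hz r hr)
        (2*ρ) β (A^p) (by linarith) hβ (Real.rpow_nonneg hA p) _ (fun y _ => le_rfl)
    calc (∫⁻ x in E,
        (∫⁻ y in E, ENNReal.ofReal ((u x - u y) ^ 2 * c x y * dist x y ^ (-(d + α))) ∂m) ^ p ∂m)
        ≤ ∫⁻ x in (E ∩ Metric.ball z (2*ρ)) ∪ (E \ Metric.ball z (2*ρ)),
            (∫⁻ y in E, ENNReal.ofReal ((u x - u y) ^ 2 * c x y * dist x y ^ (-(d + α))) ∂m)^p ∂m :=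
          lintegral_mono_set (by rw [inter_union_diff])
      _ ≤ (∫⁻ x in E ∩ Metric.ball z (2*ρ),
            (∫⁻ y in E, ENNReal.ofReal ((u x - u y) ^ 2 * c x y * dist x y ^ (-(d + α))) ∂m)^p ∂m)
          + ∫⁻ x in E \ Metric.ball z (2*ρ),
            (∫⁻ y in E, ENNReal.ofReal ((u x - u y) ^ 2 * c x y * dist x y ^ (-(d + α))) ∂m)^p ∂m :=
          lintegral_union_le _ _ _
      _ ≤ K^p * ENNReal.ofReal (C₂ * (2*ρ)^d)
          + ENNReal.ofReal (A^p * C₂ * 2 ^ d * (2*ρ) ^ (-β))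
              * (1 - ENNReal.ofReal ((2:ℝ) ^ (-β)))⁻¹ := add_le_add hA1 hA2
      _ < ⊤ := by
          apply ENNReal.add_lt_top.2
          constructor
          · exact (ENNReal.mul_ne_top hKp ENNReal.ofReal_ne_top).lt_top
          · exact (ENNReal.mul_ne_top ENNReal.ofReal_ne_top
              (geom_ne_top (Real.rpow_lt_one_of_one_lt_of_neg one_lt_two (by linarith)))).lt_top
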